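/- The first-order differences of rescaled Bell polynomials satisfy Δ_{n+1}^{(1)} = B̃_{n+1}(x_1,...,x_{n+1}) − B̃_n(x_1,...,x_n) = (1/(n+1)) Σ_{k=0}^{n} Δ_{n−k}^{(1)}·(x_{k+1} − 1), with Δ_0^{(1)} = B̃_0 = 1; more generally, the r-th order difference of B̃_n(x_1,...,x_n) equals B̃_n(x_1 − r, ..., x_n − r). -/
import Mathlib


open Finset

/-- Differences of rescaled Bell polynomials. With `B̃_0 = 1`,
`B̃_{n+1}(x) = (1/(n+1)) ∑_{k=0}^n B̃_k(x) x_{n-k+1}`, and the `r`-th order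
difference `Δ` defined by `Δ_n^{(0)} = B̃_n`, `Δ_0^{(r)} = B̃_0 = 1`,
`Δ_n^{(r)} = Δ_n^{(r-1)} - Δ_{n-1}^{(r-1)}` for `n ≥ 1`, the first-order
differences satisfy
`Δ_{n+1}^{(1)} = (1/(n+1)) ∑_{k=0}^n Δ_{n-k}^{(1)} (x_{k+1} - 1)`, and in
general `Δ_n^{(r)}(x_1,…,x_n) = B̃_n(x_1 - r, …, x_n - r)`. -/
theorem rescaledBell_differences
    (Bt : (ℕ → ℝ) → ℕ → ℝ)
    (hBt0 : ∀ x, Bt x 0 = 1)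
    (hBtrec : ∀ x n, Bt x (n + 1) =
      (1 / (n + 1 : ℝ)) * ∑ k ∈ Finset.range (n + 1), Bt x k * x (n - k + 1))
    (D : (ℕ → ℝ) → ℕ → ℕ → ℝ)
    (hD0 : ∀ x n, D x 0 n = Bt x n)
    (hDzero : ∀ x r, D x (r + 1) 0 = 1)
    (hDrec : ∀ x r n, D x (r + 1) (n + 1) = D x r (n + 1) - D x r n)
    (x : ℕ → ℝ) :
    (∀ n, D x 1 (n + 1) =
      (1 / (n + 1 : ℝ)) * ∑ k ∈ Finset.range (n + 1),
        D x 1 (n - k) * (x (k + 1) - 1)) ∧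
    (∀ r n, D x r n = Bt (fun i => x i - r) n) := by
  have hne : ∀ n : ℕ, (n + 1 : ℝ) ≠ 0 := by
    intro n; positivity
  have hBtrec' : ∀ y n, ∑ k ∈ Finset.range (n + 1), Bt y k * y (n - k + 1)
      = (n + 1 : ℝ) * Bt y (n + 1) := by
    intro y n
    rw [hBtrec y n]
    field_simp
  -- key lemma
  have key : ∀ (y : ℕ → ℝ) (n : ℕ),
      Bt (fun i => y i - 1) (n + 1) = Bt y (n + 1) - Bt y n := by
    intro y n
    induction n using Nat.strong_induction_on with
    | _ n ih =>
      set z : ℕ → ℝ := fun i => y i - 1 with hzdef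
      have hz : ∀ i, z i = y i - 1 := fun i => rfl
      have hS1 : ∑ m ∈ Finset.range n, Bt y (m + 1) * y (n - m)
          = (n + 1 : ℝ) * Bt y (n + 1) - Bt y 0 * y (n + 1) := by
        have := hBtrec' y n
        rw [Finset.sum_range_succ'] at this
        have hcong : ∀ m ∈ Finset.range n,
            Bt y (m + 1) * y (n - (m + 1) + 1) = Bt y (m + 1) * y (n - m) := by
          intro m hm
          simp only [Finset.mem_range] at hm
          congr 2
          omega
        rw [Finset.sum_congr rfl hcong] at this
        simp only [Nat.sub_zero] at this
        linarith [this]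
      have hS2 : ∑ m ∈ Finset.range n, Bt y m * y (n - m)
          = (n : ℝ) * Bt y n := by
        cases n with
        | zero => simp
        | succ p =>
          have := hBtrec' y p
          have hcong : ∀ m ∈ Finset.range (p + 1),
              Bt y m * y (p + 1 - m) = Bt y m * y (p - m + 1) := by
            intro m hm
            simp only [Finset.mem_range] at hm
            congr 2
            omega
          rw [Finset.sum_congr rfl hcong, this]
          push_cast
          ring
      have hS3 : ∑ m ∈ Finset.range n, (Bt y (m + 1) - Bt y m)
          = Bt y n - Bt y 0 := Finset.sum_range_sub (fun m => Bt y m) n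
      have hA : ∑ k ∈ Finset.range (n + 1), Bt z k * z (n - k + 1)
          = (n + 1 : ℝ) * (Bt y (n + 1) - Bt y n) := by
        rw [Finset.sum_range_succ']
        have hcong : ∀ m ∈ Finset.range n,
            Bt z (m + 1) * z (n - (m + 1) + 1)
              = (Bt y (m + 1) - Bt y m) * (y (n - m) - 1) := by
          intro m hm
          simp only [Finset.mem_range] at hm
          have h1 : n - (m + 1) + 1 = n - m := by omega
          rw [h1, ih m hm, hz]
        rw [Finset.sum_congr rfl hcong]
        have hexp : ∀ m ∈ Finset.range n,
            (Bt y (m + 1) - Bt y m) * (y (n - m) - 1)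
              = Bt y (m + 1) * y (n - m) - Bt y m * y (n - m)
                - (Bt y (m + 1) - Bt y m) := by
          intro m _; ring
        rw [Finset.sum_congr rfl hexp, Finset.sum_sub_distrib,
          Finset.sum_sub_distrib, hS1, hS2, hS3]
        have hz0 : Bt z 0 = 1 := hBt0 z
        have hy0 : Bt y 0 = 1 := hBt0 y
        have hzn : z (n - 0 + 1) = y (n + 1) - 1 := by
          rw [hz]; norm_num
        rw [Nat.sub_zero] at *
        rw [hz0, hzn, hy0]
        ring
      rw [hBtrec z n, hA]
      field_simp
  -- second part
  have h2 : ∀ r n, D x r n = Bt (fun i => x i - (r : ℝ)) n := by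
    intro r
    induction r with
    | zero =>
      intro n
      rw [hD0]
      congr 1
      funext i
      norm_num
    | succ r ihr =>
      intro n
      cases n with
      | zero => rw [hDzero, hBt0]
      | succ m =>
        rw [hDrec, ihr (m + 1), ihr m, ← key (fun i => x i - (r : ℝ)) m]
        congr 1
        funext i
        push_cast
        ring
  refine ⟨?_, h2⟩
  intro n
  have hD1 : ∀ m, D x 1 m = Bt (fun i => x i - 1) m := by
    intro m
    rw [h2 1 m]
    norm_num
  simp only [hD1]
  rw [hBtrec (fun i => x i - 1) n]
  congr 1
  rw [← Finset.sum_range_reflect (fun k => Bt (fun i => x i - 1) k *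
    ((fun i => x i - 1) (n - k + 1))) (n + 1)]
  apply Finset.sum_congr rfl
  intro k hk
  simp only [Finset.mem_range] at hk
  have h1 : n + 1 - 1 - k = n - k := by omega
  have h2' : n - (n - k) = k := by omega
  simp only [h1, h2']
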